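/- Let G be a weighted arena, B ∈ ℕ, and G' its graph of utility up to B. For all strategies λ1 of Player 1 and λ2 of Player 2 in G: if the outcome of (Φ(λ1), Φ(λ2)) in G' is winning for Player 1, or u_1^G(λ1, λ2) ≤ B, then u_1^G(λ1, λ2) = u_1^{G'}(Φ(λ1), Φ(λ2)). -/

import Mathlib

open scoped ENat

/-- A strategy maps a finite play (history, current position last) to the chosen
next position. -/
abbrev Strat (S : Type) := List S → S

/-- A two-player turn-based game arena: an ownership function (`true` = Player 1,
`false` = Player 2), an initial position and a transition relation. -/
structure Arena (S : Type) where
  owner : S → Bool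
  init : S
  edge : S → S → Prop

namespace Arena

variable {S : Type}

/-- A strategy is valid if it always follows edges of the arena. -/
def Valid (A : Arena S) (σ : Strat S) : Prop :=
  ∀ l : List S, A.edge (l.getLastD A.init) (σ l)

/-- Combine the strategy `σi` of player `i` with the strategy `σo` of her
opponent into a strategy profile. -/
def pairFor (i : Bool) (σi σo : Strat S) : Bool → Strat S :=
  fun b => if b = i then σi else σo

/-- The prefix of length `n` of the outcome of a strategy profile. -/
def outList (A : Arena S) (σ : Bool → Strat S) : ℕ → List S
  | 0 => [A.init]
  | n + 1 =>
      let l := outList A σ n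
      l ++ [σ (A.owner (l.getLastD A.init)) l]

/-- The position reached after `n` rounds. -/
def cur (A : Arena S) (σ : Bool → Strat S) (n : ℕ) : S :=
  (A.outList σ n).getLastD A.init

/-- The total weight of a finite play. -/
def pathWeight (w : S → S → ℕ) (l : List S) : ℕ :=
  ((l.zip l.tail).map fun p => w p.1 p.2).sum

/-- `n` is the round of the first visit of the outcome to the target set `C`. -/
def firstVisit (A : Arena S) (C : Set S) (σ : Bool → Strat S) (n : ℕ) : Prop :=
  A.cur σ n ∈ C ∧ ∀ m < n, A.cur σ m ∉ C

/-- The utility of a strategy profile w.r.t. edge weights `w` and target set `C`: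
the sum of the weights up to the first visit to `C`, and `⊤` if `C` is never
visited. -/
noncomputable def util (A : Arena S) (w : S → S → ℕ) (C : Set S)
    (σ : Bool → Strat S) : ℕ∞ :=
  ⨅ (n : ℕ) (_ : A.firstVisit C σ n), (pathWeight w (A.outList σ n) : ℕ∞)

/-- A strategy of player `i` is winning if all its outcomes against valid
opposing strategies visit the target set `C`. -/
def Winning (A : Arena S) (C : Set S) (i : Bool) (σi : Strat S) : Prop :=
  ∀ σo : Strat S, A.Valid σo → ∃ n, A.cur (pairFor i σi σo) n ∈ C

/-- Best response value of player `i` against opposing strategy `σo`. -/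
noncomputable def br (A : Arena S) (w : S → S → ℕ) (C : Set S)
    (i : Bool) (σo : Strat S) : ℕ∞ :=
  ⨅ (σi : Strat S) (_ : A.Valid σi), A.util w C (pairFor i σi σo)

end Arena

/-- Regret of utility `u` w.r.t. best-response value `b`, with the convention
`⊤ - ⊤ = ⊤`. -/
noncomputable def regPairVal (u b : ℕ∞) : ℕ∞ := if u = ⊤ then ⊤ else u - b

namespace Arena

variable {S : Type}

/-- The regret of strategy `σi` of player `i`. -/
noncomputable def regOf (A : Arena S) (w : S → S → ℕ) (C : Set S)
    (i : Bool) (σi : Strat S) : ℕ∞ :=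
  ⨆ (σo : Strat S) (_ : A.Valid σo),
    regPairVal (A.util w C (pairFor i σi σo)) (A.br w C i σo)

/-- The minimal regret of player `i`. -/
noncomputable def regMin (A : Arena S) (w : S → S → ℕ) (C : Set S) (i : Bool) : ℕ∞ :=
  ⨅ (σi : Strat S) (_ : A.Valid σi), A.regOf w C i σi

end Arena

namespace Arena

variable {S : Type}

/-- Best value achievable from `s` when both players cooperate, in a
target-weighted arena with target set `C` and target weights `μ`. -/
noncomputable def best (A : Arena S) (μ : S → ℕ) (C : Set S) (s : S) : ℕ∞ :=
  ⨅ (t : S) (_ : t ∈ C ∧ Relation.ReflTransGen A.edge s t), (μ t : ℕ∞)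

/-- Best alternative for Player 1 of moving from `s` to `s'`. -/
noncomputable def ba (A : Arena S) (μ : S → ℕ) (C : Set S) (s s' : S) : ℕ∞ :=
  if A.owner s = true then
    ⨅ (s'' : S) (_ : A.edge s s'' ∧ s'' ≠ s'), A.best μ C s''
  else ⊤

/-- Best alternative along a finite path (minimum of the best alternatives of
its edges, `⊤` for paths without edges). -/
noncomputable def baPath (A : Arena S) (μ : S → ℕ) (C : Set S) (l : List S) : ℕ∞ :=
  ((l.zip l.tail).map fun p => A.ba μ C p.1 p.2).foldr min ⊤

/-- The graph of best alternatives `G'` of a target-weighted arena. -/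
noncomputable def baArena (A : Arena S) (μ : S → ℕ) (C : Set S) : Arena (S × ℕ∞) where
  owner := fun p => A.owner p.1
  init := (A.init, ⊤)
  edge := fun p q =>
    A.edge p.1 q.1 ∧
      q.2 = if A.owner p.1 = true then min p.2 (A.ba μ C p.1 q.1) else p.2

/-- Utility in a target-weighted arena: the weight of the first target visited,
`⊤` if no target is visited. -/
noncomputable def utilT (A : Arena S) (μ : S → ℕ∞) (C : Set S)
    (σ : Bool → Strat S) : ℕ∞ :=
  ⨅ (n : ℕ) (_ : A.firstVisit C σ n), μ (A.cur σ n)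

/-- Best response value of player `i` in a target-weighted arena. -/
noncomputable def brT (A : Arena S) (μ : S → ℕ∞) (C : Set S)
    (i : Bool) (σo : Strat S) : ℕ∞ :=
  ⨅ (σi : Strat S) (_ : A.Valid σi), A.utilT μ C (pairFor i σi σo)

/-- Regret of a strategy in a target-weighted arena. -/
noncomputable def regOfT (A : Arena S) (μ : S → ℕ∞) (C : Set S)
    (i : Bool) (σi : Strat S) : ℕ∞ :=
  ⨆ (σo : Strat S) (_ : A.Valid σo),
    regPairVal (A.utilT μ C (pairFor i σi σo)) (A.brT μ C i σo)

/-- Minimal regret of player `i` in a target-weighted arena. -/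
noncomputable def regMinT (A : Arena S) (μ : S → ℕ∞) (C : Set S) (i : Bool) : ℕ∞ :=
  ⨅ (σi : Strat S) (_ : A.Valid σi), A.regOfT μ C i σi

/-- The min-max value of player `i` in a target-weighted arena. -/
noncomputable def minmaxT (A : Arena S) (μ : S → ℕ∞) (C : Set S) (i : Bool) : ℕ∞ :=
  ⨅ (σi : Strat S) (_ : A.Valid σi), ⨆ (σo : Strat S) (_ : A.Valid σo),
    A.utilT μ C (pairFor i σi σo)

/-- The strategy mapping `Φ₁` from strategies of `G` to strategies of the graph
of best alternatives `G'`: it simulates the given strategy on first projections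
while tracking the minimal best alternative seen so far. -/
noncomputable def Phi1 (A : Arena S) (μ : S → ℕ) (C : Set S) (σ : Strat S) :
    Strat (S × ℕ∞) :=
  fun l =>
    let h := l.map Prod.fst
    let s := σ h
    (s, A.baPath μ C (h ++ [s]))

end Arena

theorem test2 : True := trivial

namespace Arena

variable {S : Type}

/-- The graph of utility of a weighted arena: positions are enriched with the
accumulated Player-1 weight, bounded by `B`. -/
def utilArena (A : Arena S) (w : S → S → ℕ) (B : ℕ) : Arena (S × ℕ) where
  owner := fun p => A.owner p.1
  init := (A.init, 0)
  edge := fun p q => A.edge p.1 q.1 ∧ q.2 = p.2 + w p.1 q.1 ∧ q.2 ≤ B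

/-- Targets of the graph of utility: target positions reached with accumulated
weight at most `B`, whose target weight is that accumulated weight. -/
def utilTargets (C : Set S) (B : ℕ) : Set (S × ℕ) := {p | p.1 ∈ C ∧ p.2 ≤ B}

/-- The map `Φ` from strategies of `G` to strategies of the graph of utility:
simulate on first projections while tracking the accumulated weight. -/
def PhiU (w : S → S → ℕ) (σ : Strat S) : Strat (S × ℕ) :=
  fun l =>
    let h := l.map Prod.fst
    let s := σ h
    (s, pathWeight w (h ++ [s]))

end Arena


namespace Arena

variable {S : Type}

lemma pathWeight_cons_cons (w : S → S → ℕ) (a b : S) (t : List S) :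
    pathWeight w (a :: b :: t) = w a b + pathWeight w (b :: t) := by
  simp [pathWeight]

lemma pathWeight_append (w : S → S → ℕ) (d : S) :
    ∀ (l : List S) (s : S), l ≠ [] →
      pathWeight w (l ++ [s]) = pathWeight w l + w (l.getLastD d) s := by
  intro l
  induction l with
  | nil => simp
  | cons a t ih =>
    intro s _
    cases t with
    | nil => simp [pathWeight]
    | cons b t' =>
      have h := ih s (by simp)
      simp only [List.cons_append, pathWeight_cons_cons] at h ⊢
      rw [h, Nat.add_assoc, List.getLastD_cons]
      cases t' <;> rfl

lemma outList_ne_nil (A : Arena S) (σ : Bool → Strat S) (n : ℕ) :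
    A.outList σ n ≠ [] := by
  cases n <;> simp [outList]

lemma outList_succ (A : Arena S) (σ : Bool → Strat S) (n : ℕ) :
    A.outList σ (n + 1) =
      A.outList σ n ++ [σ (A.owner (A.cur σ n)) (A.outList σ n)] := rfl

lemma pathWeight_outList_mono (A : Arena S) (w : S → S → ℕ)
    (σ : Bool → Strat S) {m n : ℕ} (h : m ≤ n) :
    pathWeight w (A.outList σ m) ≤ pathWeight w (A.outList σ n) := by
  induction n with
  | zero => simpa [Nat.le_zero.mp h]
  | succ n ih =>
    rcases Nat.lt_or_ge m (n + 1) with h' | h'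
    · refine le_trans (ih (Nat.lt_succ_iff.mp h')) ?_
      rw [outList_succ, pathWeight_append w A.init _ _ (A.outList_ne_nil σ n)]
      exact Nat.le_add_right _ _
    · have : m = n + 1 := le_antisymm h h'
      simp [this]

lemma pairFor_PhiU (w : S → S → ℕ) (σ1 σ2 : Strat S) (b : Bool) :
    pairFor true (PhiU w σ1) (PhiU w σ2) b = PhiU w (pairFor true σ1 σ2 b) := by
  cases b <;> rfl

lemma utilArena_outList (A : Arena S) (w : S → S → ℕ) (B : ℕ) (σ1 σ2 : Strat S)
    (n : ℕ) :
    ((A.utilArena w B).outList (pairFor true (PhiU w σ1) (PhiU w σ2)) n).map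
        Prod.fst = A.outList (pairFor true σ1 σ2) n ∧
    (A.utilArena w B).cur (pairFor true (PhiU w σ1) (PhiU w σ2)) n
      = (A.cur (pairFor true σ1 σ2) n,
          pathWeight w (A.outList (pairFor true σ1 σ2) n)) := by
  induction n with
  | zero =>
    constructor
    · simp [outList, utilArena]
    · simp [cur, outList, utilArena, pathWeight]
  | succ n ih =>
    obtain ⟨ih1, ih2⟩ := ih
    have hcur' : (A.utilArena w B).cur (pairFor true (PhiU w σ1) (PhiU w σ2)) n
        = ((A.utilArena w B).outList (pairFor true (PhiU w σ1) (PhiU w σ2)) n).getLastD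
            (A.init, 0) := rfl
    have howner : (A.utilArena w B).owner
        ((A.utilArena w B).cur (pairFor true (PhiU w σ1) (PhiU w σ2)) n)
        = A.owner (A.cur (pairFor true σ1 σ2) n) := by
      rw [ih2]; rfl
    set b := A.owner (A.cur (pairFor true σ1 σ2) n) with hb
    have hstep : (A.utilArena w B).outList (pairFor true (PhiU w σ1) (PhiU w σ2)) (n + 1)
        = (A.utilArena w B).outList (pairFor true (PhiU w σ1) (PhiU w σ2)) n ++
            [PhiU w (pairFor true σ1 σ2 b)
              ((A.utilArena w B).outList (pairFor true (PhiU w σ1) (PhiU w σ2)) n)] := by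
      rw [outList_succ, howner, pairFor_PhiU]
    have hPhi : PhiU w (pairFor true σ1 σ2 b)
          ((A.utilArena w B).outList (pairFor true (PhiU w σ1) (PhiU w σ2)) n)
        = (pairFor true σ1 σ2 b (A.outList (pairFor true σ1 σ2) n),
            pathWeight w (A.outList (pairFor true σ1 σ2) n ++
              [pairFor true σ1 σ2 b (A.outList (pairFor true σ1 σ2) n)])) := by
      simp [PhiU, ih1]
    have hA : A.outList (pairFor true σ1 σ2) (n + 1)
        = A.outList (pairFor true σ1 σ2) n ++
            [pairFor true σ1 σ2 b (A.outList (pairFor true σ1 σ2) n)] := rfl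
    refine ⟨?_, ?_⟩
    · rw [hstep, hPhi, hA]; simp [ih1]
    · show ((A.utilArena w B).outList (pairFor true (PhiU w σ1) (PhiU w σ2)) (n+1)).getLastD
          (A.init, 0) = _
      rw [hstep, hPhi, List.getLastD_concat]
      have : A.cur (pairFor true σ1 σ2) (n + 1)
          = pairFor true σ1 σ2 b (A.outList (pairFor true σ1 σ2) n) := by
        show (A.outList (pairFor true σ1 σ2) (n+1)).getLastD A.init = _
        rw [hA, List.getLastD_concat]
      rw [this, hA]

end Arena

/-- If the outcome of `(Φ(λ₁), Φ(λ₂))` in the graph of utility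
`G'` is winning for Player 1, or `u₁^G(λ₁,λ₂) ≤ B`, then the utilities in `G`
and `G'` coincide. -/
theorem util_eq_utilArena {S : Type} (A : Arena S) (w : S → S → ℕ) (C : Set S)
    (B : ℕ) (σ1 σ2 : Strat S) :
    ((∃ n : ℕ, (A.utilArena w B).cur
        (Arena.pairFor true (Arena.PhiU w σ1) (Arena.PhiU w σ2)) n ∈
          Arena.utilTargets C B) ∨
      A.util w C (Arena.pairFor true σ1 σ2) ≤ (B : ℕ∞)) →
    A.util w C (Arena.pairFor true σ1 σ2) =
      (A.utilArena w B).utilT (fun p => (p.2 : ℕ∞)) (Arena.utilTargets C B)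
        (Arena.pairFor true (Arena.PhiU w σ1) (Arena.PhiU w σ2)) := by
  intro hyp
  classical
  set τ := Arena.pairFor true σ1 σ2 with hτ
  set τ' := Arena.pairFor true (Arena.PhiU w σ1) (Arena.PhiU w σ2) with hτ'
  have hcur : ∀ n, (A.utilArena w B).cur τ' n
      = (A.cur τ n, Arena.pathWeight w (A.outList τ n)) :=
    fun n => (Arena.utilArena_outList A w B σ1 σ2 n).2
  set pw : ℕ → ℕ := fun n => Arena.pathWeight w (A.outList τ n) with hpwdef
  have htgt : ∀ n, (A.utilArena w B).cur τ' n ∈ Arena.utilTargets C B ↔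
      (A.cur τ n ∈ C ∧ pw n ≤ B) := by
    intro n; rw [hcur n]; exact Iff.rfl
  have hE : ∃ m, A.cur τ m ∈ C := by
    rcases hyp with ⟨n, hn⟩ | hle
    · exact ⟨n, ((htgt n).mp hn).1⟩
    · by_contra h
      push_neg at h
      have htop : A.util w C τ = ⊤ := by
        rw [Arena.util, iInf_eq_top]
        intro n
        rw [iInf_eq_top]
        intro hn
        exact absurd hn.1 (h n)
      rw [htop] at hle
      exact (ENat.coe_ne_top B) (top_le_iff.mp hle)
  set n₀ := Nat.find hE with hn₀
  have h₀ : A.cur τ n₀ ∈ C := Nat.find_spec hE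
  have hmin : ∀ m < n₀, A.cur τ m ∉ C := fun m hm => Nat.find_min hE hm
  have hfv : A.firstVisit C τ n₀ := ⟨h₀, hmin⟩
  have huniq : ∀ m, A.firstVisit C τ m → m = n₀ := by
    intro m hm
    have h1 : n₀ ≤ m := Nat.find_min' hE hm.1
    rcases h1.lt_or_eq with h | h
    · exact absurd h₀ (hm.2 n₀ h)
    · exact h.symm
  have hu : A.util w C τ = (pw n₀ : ℕ∞) := by
    rw [Arena.util]
    refine le_antisymm (iInf₂_le n₀ hfv) (le_iInf₂ fun m hm => ?_)
    rw [huniq m hm]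
  have hpwB : pw n₀ ≤ B := by
    rcases hyp with ⟨n, hn⟩ | hle
    · obtain ⟨hnC, hnB⟩ := (htgt n).mp hn
      exact le_trans (Arena.pathWeight_outList_mono A w τ (Nat.find_min' hE hnC)) hnB
    · rw [hu] at hle; exact_mod_cast hle
  have hfv' : (A.utilArena w B).firstVisit (Arena.utilTargets C B) τ' n₀ := by
    refine ⟨(htgt n₀).mpr ⟨h₀, hpwB⟩, fun m hm hmem => ?_⟩
    exact hmin m hm ((htgt m).mp hmem).1
  have huniq' : ∀ m,
      (A.utilArena w B).firstVisit (Arena.utilTargets C B) τ' m → m = n₀ := by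
    intro m hm
    have h1 : n₀ ≤ m := Nat.find_min' hE ((htgt m).mp hm.1).1
    rcases h1.lt_or_eq with h | h
    · exact absurd ((htgt n₀).mpr ⟨h₀, hpwB⟩) (hm.2 n₀ h)
    · exact h.symm
  have hμ : ∀ n, (fun p : S × ℕ => (p.2 : ℕ∞)) ((A.utilArena w B).cur τ' n)
      = (pw n : ℕ∞) := fun n => by rw [hcur n]
  have hu' : (A.utilArena w B).utilT (fun p => (p.2 : ℕ∞))
      (Arena.utilTargets C B) τ' = (pw n₀ : ℕ∞) := by
    rw [Arena.utilT]
    refine le_antisymm ((iInf₂_le n₀ hfv').trans_eq (hμ n₀)) (le_iInf₂ fun m hm => ?_)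
    simp [huniq' m hm, hcur n₀]
    exact le_rfl
  rw [hu, hu']
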